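/- Potential score is antitone under extension: if itineraries I₁ ⊆ I₂ for the same OPMPC instance, then pot(I₂) ≤ pot(I₁), where pot(I) = score(I) + extra(I). -/

import Mathlib

noncomputable def topSum (S : Multiset ℝ) (k : ℕ) : ℝ :=
  ((S.sort (· ≤ ·)).reverse.take k).sum

noncomputable def extra {ι K : Type} [DecidableEq ι] [DecidableEq K]
    (P : Finset ι) (Kset : Finset K) (cat : ι → K) (score : ι → ℝ)
    (maxk : K → ℕ) (I : Finset ι) : ℝ :=
  ∑ k ∈ Kset, topSum (((P \ I).filter (fun p => cat p = k)).val.map score)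
      (maxk k - (I.filter (fun p => cat p = k)).card)

noncomputable def pot {ι K : Type} [DecidableEq ι] [DecidableEq K]
    (P : Finset ι) (Kset : Finset K) (cat : ι → K) (score : ι → ℝ)
    (maxk : K → ℕ) (I : Finset ι) : ℝ :=
  (∑ p ∈ I, score p) + extra P Kset cat score maxk I


lemma topSum_nonneg (S : Multiset ℝ) (k : ℕ) (h : ∀ x ∈ S, 0 ≤ x) : 0 ≤ topSum S k := by
  apply List.sum_nonneg
  intro x hx
  apply h
  have := (List.take_sublist k (S.sort (· ≤ ·)).reverse).mem hx
  rw [List.mem_reverse] at this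
  exact (Multiset.mem_sort _).1 this

lemma topSum_zero (S : Multiset ℝ) : topSum S 0 = 0 := by simp [topSum]

lemma sort_max (S : Multiset ℝ) (a : ℝ) (ha : a ∈ S) (hmax : ∀ b ∈ S, b ≤ a) :
    S.sort (· ≤ ·) = (S.erase a).sort (· ≤ ·) ++ [a] := by
  have hperm : List.Perm (S.sort (· ≤ ·)) ((S.erase a).sort (· ≤ ·) ++ [a]) := by
    apply Multiset.coe_eq_coe.mp
    rw [Multiset.sort_eq, ← Multiset.coe_add, Multiset.sort_eq]
    rw [show (([a] : List ℝ) : Multiset ℝ) = {a} from rfl, add_comm, Multiset.singleton_add, Multiset.cons_erase ha]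
  have hs2 : List.Pairwise (· ≤ ·) ((S.erase a).sort (· ≤ ·) ++ [a]) := by
    rw [List.pairwise_append]
    refine ⟨Multiset.pairwise_sort _ _, List.pairwise_singleton _ a, ?_⟩
    intro x hx y hy
    rw [List.mem_singleton] at hy
    subst hy
    exact hmax x (Multiset.mem_of_mem_erase ((Multiset.mem_sort _).1 hx))
  exact List.Perm.eq_of_pairwise' (Multiset.pairwise_sort _ _) hs2 hperm

lemma topSum_succ (S : Multiset ℝ) (a : ℝ) (k : ℕ) (ha : a ∈ S) (hmax : ∀ b ∈ S, b ≤ a) :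
    topSum S (k + 1) = a + topSum (S.erase a) k := by
  unfold topSum
  rw [sort_max S a ha hmax, List.reverse_append]
  simp

lemma le_erase {T S : Multiset ℝ} {a : ℝ} (h : T ≤ S) (ha : a ∉ T) : T ≤ S.erase a := by
  rw [Multiset.le_iff_count]
  intro x
  rcases eq_or_ne x a with rfl | hx
  · simp [Multiset.count_eq_zero.2 ha]
  · rw [Multiset.count_erase_of_ne hx]
    exact Multiset.le_iff_count.1 h x

lemma sum_le_topSum (k : ℕ) : ∀ (S T : Multiset ℝ), (∀ x ∈ S, 0 ≤ x) → T ≤ S →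
    T.card ≤ k → T.sum ≤ topSum S k := by
  induction k with
  | zero =>
    intro S T _ _ hc
    interval_cases h : T.card
    · rw [Multiset.card_eq_zero] at h
      simp [h, topSum_zero]
  | succ k ih =>
    intro S T hS hTS hc
    rcases eq_or_ne S 0 with rfl | hSne
    · have : T = 0 := le_antisymm (by simpa using hTS) (Multiset.zero_le T)
      simpa [this] using topSum_nonneg 0 (k + 1) (by simp)
    · have hne : S.toFinset.Nonempty := by
        simpa [Multiset.toFinset_nonempty] using hSne
      obtain ⟨a, haF, hamax⟩ := S.toFinset.exists_max_image id hne
      have haS : a ∈ S := Multiset.mem_toFinset.1 haF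
      have hmax : ∀ b ∈ S, b ≤ a := fun b hb => hamax b (Multiset.mem_toFinset.2 hb)
      rw [topSum_succ S a k haS hmax]
      have hS' : ∀ x ∈ S.erase a, 0 ≤ x := fun x hx => hS x (Multiset.mem_of_mem_erase hx)
      by_cases haT : a ∈ T
      · have h1 : T.erase a ≤ S.erase a := Multiset.erase_le_erase a hTS
        have h2 : (T.erase a).card ≤ k := by
          rw [Multiset.card_erase_of_mem haT, Nat.pred_eq_sub_one]
          omega
        have := ih (S.erase a) (T.erase a) hS' h1 h2
        have hsum : T.sum = a + (T.erase a).sum := by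
          conv_lhs => rw [← Multiset.cons_erase haT]
          simp
        linarith
      · rcases eq_or_ne T 0 with rfl | hTne
        · have : 0 ≤ a := hS a haS
          have := topSum_nonneg (S.erase a) k hS'
          simp; linarith
        · obtain ⟨b, hbT⟩ := Multiset.exists_mem_of_ne_zero hTne
          have hTS' : T ≤ S.erase a := le_erase hTS haT
          have h1 : T.erase b ≤ S.erase a := le_trans (Multiset.erase_le b T) hTS'
          have h2 : (T.erase b).card ≤ k := by
            rw [Multiset.card_erase_of_mem hbT, Nat.pred_eq_sub_one]
            omega
          have := ih (S.erase a) (T.erase b) hS' h1 h2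
          have hba : b ≤ a := hmax b (Multiset.mem_of_le hTS hbT)
          have hsum : T.sum = b + (T.erase b).sum := by
            conv_lhs => rw [← Multiset.cons_erase hbT]
            simp
          linarith

lemma percat {ι : Type} [DecidableEq ι] (Pk A B : Finset ι) (score : ι → ℝ) (m : ℕ)
    (hscore : ∀ p, 0 ≤ score p) (hAB : A ⊆ B) (hBP : B ⊆ Pk) (hB : B.card ≤ m) :
    (∑ p ∈ B, score p) + topSum ((Pk \ B).val.map score) (m - B.card) ≤
    (∑ p ∈ A, score p) + topSum ((Pk \ A).val.map score) (m - A.card) := by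
  have hdisj : Disjoint (B \ A) (Pk \ B) := by
    rw [Finset.disjoint_left]
    intro x hx hx2
    simp only [Finset.mem_sdiff] at hx hx2
    tauto
  have hU : (B \ A).disjUnion (Pk \ B) hdisj = Pk \ A := by
    rw [Finset.disjUnion_eq_union]
    ext x
    have h1 := @hAB x
    have h2 := @hBP x
    simp only [Finset.mem_union, Finset.mem_sdiff]
    tauto
  have hval : (Pk \ A).val = (B \ A).val + (Pk \ B).val := by
    rw [← hU]
    rfl
  set L := ((((Pk \ B).val.map score).sort (· ≤ ·)).reverse.take (m - B.card)) with hL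
  set T : Multiset ℝ := (B \ A).val.map score + ↑L with hT
  set S : Multiset ℝ := (Pk \ A).val.map score with hS
  have hSnn : ∀ x ∈ S, 0 ≤ x := by
    intro x hx
    obtain ⟨p, _, rfl⟩ := Multiset.mem_map.1 hx
    exact hscore p
  have hTle : T ≤ S := by
    rw [hS, hval, Multiset.map_add]
    apply add_le_add_right
    calc (↑L : Multiset ℝ) ≤ ↑((((Pk \ B).val.map score).sort (· ≤ ·)).reverse) :=
          Multiset.coe_le.2 (List.take_sublist _ _).subperm
      _ = (Pk \ B).val.map score := by
          rw [Multiset.coe_reverse, Multiset.sort_eq]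
  have hcardBA : (B \ A).card = B.card - A.card := Finset.card_sdiff_of_subset hAB
  have hcardAB : A.card ≤ B.card := Finset.card_le_card hAB
  have hLlen : L.length ≤ m - B.card := by
    rw [hL]
    simp
  have hcard : T.card ≤ m - A.card := by
    rw [hT, Multiset.card_add, Multiset.card_map, Multiset.coe_card, Finset.card_val] at *
    omega
  have hmain := sum_le_topSum (m - A.card) S T hSnn hTle hcard
  have hsum : T.sum = (∑ p ∈ B \ A, score p) + topSum ((Pk \ B).val.map score) (m - B.card) := by
    rw [hT, Multiset.sum_add]
    congr 1
  have hBsplit : (∑ p ∈ B \ A, score p) + (∑ p ∈ A, score p) = ∑ p ∈ B, score p :=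
    Finset.sum_sdiff hAB
  rw [hsum] at hmain
  linarith

/-- potential score is antitone under extension. -/
theorem pot_antitone {ι K : Type} [DecidableEq ι] [DecidableEq K]
    (P : Finset ι) (Kset : Finset K) (cat : ι → K) (score : ι → ℝ)
    (maxk : K → ℕ)
    (hscore : ∀ p, 0 ≤ score p)
    (hcat : ∀ p ∈ P, cat p ∈ Kset)
    (I₁ I₂ : Finset ι)
    (hsub : I₁ ⊆ I₂) (hI₂P : I₂ ⊆ P)
    (h₁ : ∀ k, (I₁.filter (fun p => cat p = k)).card ≤ maxk k)
    (h₂ : ∀ k, (I₂.filter (fun p => cat p = k)).card ≤ maxk k) :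
    pot P Kset cat score maxk I₂ ≤ pot P Kset cat score maxk I₁ := by
  have key : ∀ I : Finset ι, I ⊆ P →
      (∑ p ∈ I, score p) = ∑ k ∈ Kset, ∑ p ∈ I.filter (fun p => cat p = k), score p :=
    fun I hIP => (Finset.sum_fiberwise_of_maps_to (fun p hp => hcat p (hIP hp)) score).symm
  have hfilter : ∀ (I : Finset ι) (k : K), (P \ I).filter (fun p => cat p = k) =
      (P.filter (fun p => cat p = k)) \ (I.filter (fun p => cat p = k)) := by
    intro I k
    ext x
    simp only [Finset.mem_filter, Finset.mem_sdiff]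
    tauto
  unfold pot extra
  rw [key I₂ hI₂P, key I₁ (hsub.trans hI₂P), ← Finset.sum_add_distrib, ← Finset.sum_add_distrib]
  apply Finset.sum_le_sum
  intro k _
  rw [hfilter I₂ k, hfilter I₁ k]
  exact percat (P.filter (fun p => cat p = k)) (I₁.filter (fun p => cat p = k))
    (I₂.filter (fun p => cat p = k)) score (maxk k) hscore
    (Finset.filter_subset_filter _ hsub) (Finset.filter_subset_filter _ hI₂P) (h₂ k)
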